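/- arXiv:1402.6773 — 4 statements merged into one kernel-verified Lean document; each statement's English description precedes it below -/
import Mathlib

section
/- Let ρ: ℝ≥0 → ℝ≥0 be a nondecreasing concave function with ρ(0) = 0. Then for every real r > 1, the function x ↦ ρ(x^{1/r})^r is also nondecreasing and concave on ℝ≥0. -/
/-- Two-point Minkowski: concavity inequality for `x ↦ (c * x ^ (1/r) + d) ^ r`. -/
lemma mink_aux {r : ℝ} (hr : 1 ≤ r) {a b c d u v : ℝ} (ha : 0 ≤ a) (hb : 0 ≤ b)
    (hab : a + b = 1) (hc : 0 ≤ c) (hd : 0 ≤ d) (hu : 0 ≤ u) (hv : 0 ≤ v) :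
    a * (c * u + d) ^ r + b * (c * v + d) ^ r
      ≤ (c * (a * u ^ r + b * v ^ r) ^ (1 / r) + d) ^ r := by
  have hr0 : (0:ℝ) < r := lt_of_lt_of_le one_pos hr
  have hrne : r ≠ 0 := ne_of_gt hr0
  set A : ℝ := a ^ (1/r) with hA
  set B : ℝ := b ^ (1/r) with hB
  have hA0 : 0 ≤ A := Real.rpow_nonneg ha _
  have hB0 : 0 ≤ B := Real.rpow_nonneg hb _
  have hAr : A ^ r = a := by
    rw [hA, one_div, Real.rpow_inv_rpow ha hrne]
  have hBr : B ^ r = b := by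
    rw [hB, one_div, Real.rpow_inv_rpow hb hrne]
  set f : Fin 2 → ℝ := ![A * (c * u), B * (c * v)] with hf
  set g : Fin 2 → ℝ := ![A * d, B * d] with hg
  have key := Real.Lp_add_le Finset.univ f g hr
  have habs : ∀ x : ℝ, 0 ≤ x → |x| = x := fun x hx => abs_of_nonneg hx
  have s1 : ∑ i, |f i + g i| ^ r = a * (c * u + d) ^ r + b * (c * v + d) ^ r := by
    rw [Fin.sum_univ_two]
    simp only [hf, hg, Matrix.cons_val_zero, Matrix.cons_val_one, Matrix.head_cons]
    rw [← mul_add, ← mul_add, habs _ (by positivity), habs _ (by positivity),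
      Real.mul_rpow hA0 (by positivity), Real.mul_rpow hB0 (by positivity), hAr, hBr]
  have s2 : ∑ i, |f i| ^ r = c ^ r * (a * u ^ r + b * v ^ r) := by
    rw [Fin.sum_univ_two]
    simp only [hf, Matrix.cons_val_zero, Matrix.cons_val_one, Matrix.head_cons]
    rw [habs _ (by positivity), habs _ (by positivity),
      Real.mul_rpow hA0 (by positivity), Real.mul_rpow hB0 (by positivity), hAr, hBr,
      Real.mul_rpow hc hu, Real.mul_rpow hc hv]
    ring
  have s3 : ∑ i, |g i| ^ r = d ^ r := by
    rw [Fin.sum_univ_two]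
    simp only [hg, Matrix.cons_val_zero, Matrix.cons_val_one, Matrix.head_cons]
    rw [habs _ (by positivity), habs _ (by positivity),
      Real.mul_rpow hA0 hd, Real.mul_rpow hB0 hd, hAr, hBr, ← add_mul, hab, one_mul]
  rw [s1, s2, s3] at key
  have e2 : (c ^ r * (a * u ^ r + b * v ^ r)) ^ (1/r)
      = c * (a * u ^ r + b * v ^ r) ^ (1/r) := by
    rw [Real.mul_rpow (by positivity) (by positivity), one_div,
      Real.rpow_rpow_inv hc hrne]
  have e3 : (d ^ r) ^ (1/r) = d := by
    rw [one_div, Real.rpow_rpow_inv hd hrne]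
  rw [e2, e3] at key
  have lhs0 : 0 ≤ a * (c * u + d) ^ r + b * (c * v + d) ^ r := by positivity
  calc a * (c * u + d) ^ r + b * (c * v + d) ^ r
      = ((a * (c * u + d) ^ r + b * (c * v + d) ^ r) ^ (1/r)) ^ r := by
        rw [one_div, Real.rpow_inv_rpow lhs0 hrne]
    _ ≤ (c * (a * u ^ r + b * v ^ r) ^ (1/r) + d) ^ r :=
        Real.rpow_le_rpow (Real.rpow_nonneg lhs0 _) key (le_of_lt hr0)

/-- Key two-point concavity inequality in the case `x < y`, `0 < a`, `0 < b`. -/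
lemma key_aux (ρ : ℝ → ℝ) (hnn : ∀ x ≥ 0, 0 ≤ ρ x)
    (hmono : MonotoneOn ρ (Set.Ici 0))
    (hconc : ConcaveOn ℝ (Set.Ici 0) ρ) (h0 : ρ 0 = 0)
    (r : ℝ) (hr : 1 < r) {x y a b : ℝ}
    (hx : 0 ≤ x) (hy : 0 ≤ y) (hxy : x < y) (ha : 0 < a) (hb : 0 < b)
    (hab : a + b = 1) :
    a * (ρ (x ^ (1/r))) ^ r + b * (ρ (y ^ (1/r))) ^ r
      ≤ (ρ ((a * x + b * y) ^ (1/r))) ^ r := by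
  have hr0 : (0:ℝ) < r := lt_trans one_pos hr
  have hrne : r ≠ 0 := ne_of_gt hr0
  have hir : (0:ℝ) < 1/r := by positivity
  set u : ℝ := x ^ (1/r) with hu
  set v : ℝ := y ^ (1/r) with hv
  set z : ℝ := a * x + b * y with hz
  set w : ℝ := z ^ (1/r) with hw
  have hz0 : 0 ≤ z := by positivity
  have hu0 : 0 ≤ u := Real.rpow_nonneg hx _
  have hv0 : 0 ≤ v := Real.rpow_nonneg hy _
  have hw0' : 0 ≤ w := Real.rpow_nonneg hz0 _
  have hxz : x < z := by rw [hz]; nlinarith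
  have hzy : z < y := by rw [hz]; nlinarith
  have huw : u < w := Real.rpow_lt_rpow hx hxz hir
  have hwv : w < v := Real.rpow_lt_rpow hz0 hzy hir
  have hw0 : 0 < w := lt_of_le_of_lt hu0 huw
  have humem : u ∈ Set.Ici (0:ℝ) := hu0
  have hvmem : v ∈ Set.Ici (0:ℝ) := hv0
  have hwmem : w ∈ Set.Ici (0:ℝ) := hw0'
  set c : ℝ := (ρ v - ρ w) / (v - w) with hcdef
  set d : ℝ := ρ w - c * w with hddef
  have hc : 0 ≤ c := by
    apply div_nonneg
    · exact sub_nonneg.2 (hmono hwmem hvmem (le_of_lt hwv))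
    · exact le_of_lt (sub_pos.2 hwv)
  -- slope inequality at 0 < w < v gives d ≥ 0
  have slope2 := hconc.slope_anti_adjacent (x := 0) (y := w) (z := v)
    Set.self_mem_Ici hvmem hw0 hwv
  rw [h0, sub_zero, sub_zero] at slope2
  have hd : 0 ≤ d := by
    rw [hddef]
    have hcw : c * w ≤ ρ w := by
      rw [hcdef]
      exact (le_div_iff₀ hw0).mp slope2
    linarith
  -- slope inequality at u < w < v gives ρ u ≤ c * u + d
  have hlu : ρ u ≤ c * u + d := by
    have slope1 := hconc.slope_anti_adjacent humem hvmem huw hwv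
    have h1 : c * (w - u) ≤ ρ w - ρ u :=
      (le_div_iff₀ (sub_pos.2 huw)).mp slope1
    rw [hddef]; nlinarith
  have hlv : c * v + d = ρ v := by
    have hvw : v - w ≠ 0 := ne_of_gt (sub_pos.2 hwv)
    have hmul : c * (v - w) = ρ v - ρ w := by
      rw [hcdef]; exact div_mul_cancel₀ _ hvw
    rw [hddef]
    linear_combination hmul
  have hlw : c * w + d = ρ w := by rw [hddef]; ring
  have hur : u ^ r = x := by rw [hu, one_div, Real.rpow_inv_rpow hx hrne]
  have hvr : v ^ r = y := by rw [hv, one_div, Real.rpow_inv_rpow hy hrne]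
  calc a * (ρ u) ^ r + b * (ρ v) ^ r
      ≤ a * (c * u + d) ^ r + b * (c * v + d) ^ r := by
        refine add_le_add ?_ ?_
        · exact mul_le_mul_of_nonneg_left
            (Real.rpow_le_rpow (hnn u hu0) hlu (le_of_lt hr0)) (le_of_lt ha)
        · rw [hlv]
    _ ≤ (c * (a * u ^ r + b * v ^ r) ^ (1/r) + d) ^ r :=
        mink_aux (le_of_lt hr) (le_of_lt ha) (le_of_lt hb) hab hc hd hu0 hv0
    _ = (ρ w) ^ r := by rw [hur, hvr, ← hz, ← hw, hlw]

theorem stmt1 (ρ : ℝ → ℝ) (hnn : ∀ x ≥ 0, 0 ≤ ρ x)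
    (hmono : MonotoneOn ρ (Set.Ici 0))
    (hconc : ConcaveOn ℝ (Set.Ici 0) ρ) (h0 : ρ 0 = 0)
    (r : ℝ) (hr : 1 < r) :
    MonotoneOn (fun x : ℝ => (ρ (x ^ (1 / r))) ^ r) (Set.Ici 0) ∧
    ConcaveOn ℝ (Set.Ici 0) (fun x : ℝ => (ρ (x ^ (1 / r))) ^ r) := by
  have hr0 : (0:ℝ) < r := lt_trans one_pos hr
  have hmem : ∀ x : ℝ, 0 ≤ x → x ^ (1/r) ∈ Set.Ici (0:ℝ) :=
    fun x hx => Real.rpow_nonneg hx _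
  constructor
  · intro x hx y hy hxy
    dsimp only
    refine Real.rpow_le_rpow (hnn _ (hmem x hx)) ?_ (le_of_lt hr0)
    exact hmono (hmem x hx) (hmem y hy)
      (Real.rpow_le_rpow hx hxy (by positivity))
  · refine ⟨convex_Ici 0, ?_⟩
    intro x hx y hy a b ha hb hab
    simp only [smul_eq_mul]
    rcases eq_or_lt_of_le ha with rfl | ha'
    · have hb1 : b = 1 := by linarith
      subst hb1; simp
    rcases eq_or_lt_of_le hb with rfl | hb'
    · have ha1 : a = 1 := by linarith
      subst ha1; simp
    rcases lt_trichotomy x y with hxy | rfl | hyx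
    · exact key_aux ρ hnn hmono hconc h0 r hr hx hy hxy ha' hb' hab
    · have hxx : a * x + b * x = x := by rw [← add_mul, hab, one_mul]
      rw [hxx]
      exact le_of_eq (by rw [← add_mul, hab, one_mul])
    · have := key_aux ρ hnn hmono hconc h0 r hr hy hx hyx hb' ha' (by linarith)
      rw [show a * x + b * y = b * y + a * x by ring]
      linarith
end

section
/- Let ρ: ℝ≥0 → ℝ≥0 be a nondecreasing concave function with ρ(0) = 0, ρ(u) > 0 for u > 0, and ∫_{0^+} du/ρ(u) = +∞ (i.e., for some a > 0, the integral of 1/ρ(u) over (0, a] diverges). Then for every real r with 0 < r < 1, ∫_{0^+} du / ρ(u^{1/r})^r = +∞. -/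
open MeasureTheory Set

theorem stmt2 (ρ : ℝ → ℝ) (hnn : ∀ x ≥ 0, 0 ≤ ρ x)
    (hmono : MonotoneOn ρ (Set.Ici 0))
    (hconc : ConcaveOn ℝ (Set.Ici 0) ρ) (h0 : ρ 0 = 0)
    (hpos : ∀ u > (0 : ℝ), 0 < ρ u)
    (hdiv : ∃ a > (0 : ℝ),
      ¬ MeasureTheory.IntegrableOn (fun u => 1 / ρ u) (Set.Ioc 0 a))
    (r : ℝ) (hr0 : 0 < r) (hr1 : r < 1) :
    ∃ b > (0 : ℝ),
      ¬ MeasureTheory.IntegrableOn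
        (fun u => 1 / (ρ (u ^ (1 / r))) ^ r) (Set.Ioc 0 b) := by
  obtain ⟨a, ha, hni⟩ := hdiv
  have hρa : 0 < ρ a := hpos a ha
  set s : ℝ := 1 - r with hs_def
  have hs : 0 < s := by simp [hs_def]; linarith
  set C : ℝ := (a / ρ a) ^ s / r with hC_def
  refine ⟨a ^ r, Real.rpow_pos_of_pos ha r, fun hInt => hni ?_⟩
  -- image of Ioc 0 a under v ↦ v ^ r
  have himg : (fun v : ℝ => v ^ r) '' Set.Ioc 0 a = Set.Ioc 0 (a ^ r) := by
    ext u
    constructor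
    · rintro ⟨v, ⟨hv0, hva⟩, rfl⟩
      exact ⟨Real.rpow_pos_of_pos hv0 r, Real.rpow_le_rpow hv0.le hva hr0.le⟩
    · rintro ⟨hu0, hua⟩
      refine ⟨u ^ r⁻¹, ⟨Real.rpow_pos_of_pos hu0 _, ?_⟩,
        Real.rpow_inv_rpow hu0.le hr0.ne'⟩
      calc u ^ r⁻¹ ≤ (a ^ r) ^ r⁻¹ :=
            Real.rpow_le_rpow hu0.le hua (by positivity)
        _ = a := Real.rpow_rpow_inv ha.le hr0.ne'
  have hderiv : ∀ v ∈ Set.Ioc 0 a,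
      HasDerivWithinAt (fun v : ℝ => v ^ r) (r * v ^ (r - 1)) (Set.Ioc 0 a) v :=
    fun v hv => (Real.hasDerivAt_rpow_const (Or.inl hv.1.ne')).hasDerivWithinAt
  have hinj : Set.InjOn (fun v : ℝ => v ^ r) (Set.Ioc 0 a) := by
    have : StrictMonoOn (fun v : ℝ => v ^ r) (Set.Ioc 0 a) :=
      fun x hx y _ hxy => Real.rpow_lt_rpow hx.1.le hxy hr0
    exact this.injOn
  rw [← himg, integrableOn_image_iff_integrableOn_abs_deriv_smul
    measurableSet_Ioc hderiv hinj] at hInt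
  -- hInt : IntegrableOn (fun v => |r * v ^ (r-1)| • (1 / ρ ((v ^ r) ^ (1/r)) ^ r)) (Ioc 0 a)
  have hIntC : IntegrableOn
      (fun v => C * (|r * v ^ (r - 1)| • (1 / ρ ((v ^ r) ^ (1 / r)) ^ r)))
      (Set.Ioc 0 a) := hInt.const_mul C
  -- concavity: ρ a * v ≤ a * ρ v on (0, a]
  have hlin : ∀ v ∈ Set.Ioc 0 a, ρ a * v ≤ a * ρ v := by
    intro v hv
    have h := hconc.2 (show a ∈ Set.Ici (0:ℝ) from ha.le)
      (show (0:ℝ) ∈ Set.Ici (0:ℝ) from Set.self_mem_Ici)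
      (div_nonneg hv.1.le ha.le)
      (show (0:ℝ) ≤ 1 - v / a by
        rw [sub_nonneg, div_le_one ha]; exact hv.2)
      (by ring)
    simp only [smul_eq_mul, h0, mul_zero, add_zero] at h
    rw [div_mul_cancel₀ _ ha.ne'] at h
    have h' : v / a * ρ a ≤ ρ v := h
    rw [div_mul_eq_mul_div, div_le_iff₀ ha] at h'
    linarith
  -- measurability of 1/ρ on (0, a]
  have hcont : ContinuousOn ρ (Set.Ioi 0) :=
    (hconc.subset Set.Ioi_subset_Ici_self (convex_Ioi 0)).continuousOn isOpen_Ioi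
  have hcont2 : ContinuousOn (fun u => 1 / ρ u) (Set.Ioc 0 a) :=
    continuousOn_const.div (hcont.mono Set.Ioc_subset_Ioi_self)
      (fun x hx => (hpos x hx.1).ne')
  refine MeasureTheory.Integrable.mono' hIntC
    (hcont2.aestronglyMeasurable measurableSet_Ioc) ?_
  rw [MeasureTheory.ae_restrict_iff' measurableSet_Ioc]
  refine MeasureTheory.ae_of_all _ fun v hv => ?_
  have hv0 : 0 < v := hv.1
  have hρv : 0 < ρ v := hpos v hv0
  rw [show ((v ^ r) ^ (1/r)) = v from by rw [one_div]; exact Real.rpow_rpow_inv hv0.le hr0.ne', smul_eq_mul]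
  rw [Real.norm_eq_abs, abs_of_pos (by positivity : (0:ℝ) < 1 / ρ v)]
  rw [abs_of_pos (by positivity : (0:ℝ) < r * v ^ (r - 1))]
  -- goal: 1 / ρ v ≤ C * (r * v ^ (r-1) * (1 / ρ v ^ r))
  have key1 : v ≤ a / ρ a * ρ v := by
    rw [div_mul_eq_mul_div, le_div_iff₀ hρa]
    nlinarith [hlin v hv]
  have key2 : v ^ s ≤ (a / ρ a) ^ s * ρ v ^ s := by
    calc v ^ s ≤ (a / ρ a * ρ v) ^ s := Real.rpow_le_rpow hv0.le key1 hs.le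
      _ = (a / ρ a) ^ s * ρ v ^ s := Real.mul_rpow (by positivity) hρv.le
  have key4 : ρ v ^ r * ρ v ^ s = ρ v := by
    rw [← Real.rpow_add hρv, show r + s = 1 by simp [hs_def], Real.rpow_one]
  have hgoal : ρ v ^ r * v ^ s ≤ (a / ρ a) ^ s * ρ v := by
    calc ρ v ^ r * v ^ s ≤ ρ v ^ r * ((a / ρ a) ^ s * ρ v ^ s) := by
          have : (0:ℝ) ≤ ρ v ^ r := by positivity
          nlinarith [key2]
      _ = (a / ρ a) ^ s * (ρ v ^ r * ρ v ^ s) := by ring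
      _ = (a / ρ a) ^ s * ρ v := by rw [key4]
  have h2 : (1:ℝ) / ρ v ≤ (a / ρ a) ^ s / (v ^ s * ρ v ^ r) := by
    rw [div_le_div_iff₀ hρv (by positivity)]
    nlinarith [hgoal]
  have h3 : C * (r * v ^ (r - 1) * (1 / ρ v ^ r))
      = (a / ρ a) ^ s / (v ^ s * ρ v ^ r) := by
    have hvs : v ^ (r - 1) = (v ^ s)⁻¹ := by
      rw [show r - 1 = -s by simp [hs_def], Real.rpow_neg hv0.le]
    rw [hvs, hC_def]
    have h1 : v ^ s ≠ 0 := by positivity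
    have h4 : ρ v ^ r ≠ 0 := by positivity
    field_simp
  rw [h3]
  exact h2
end

section
/- If g: Ω × [0,T] × ℝᵏ × ℝ^{k×d} → ℝᵏ satisfies: there is a nondecreasing continuous κ: ℝ≥0 → ℝ≥0 with κ(0)=0, κ(u)>0 for u>0, ∫_{0^+} u^{p-1}/κ(u)^p du = +∞ and |g(ω,t,y₁,z) − g(ω,t,y₂,z)| ≤ κ(|y₁−y₂|), and moreover κ is concave, then setting ρ(u) = κ(u^{1/p})^p + u for p > 1, ρ is nondecreasing, concave, ρ(0)=0, ρ(u)>0 for u>0, ∫_{0^+} du/ρ(u) = +∞, and |g(ω,t,y₁,z) − g(ω,t,y₂,z)|^p ≤ ρ(|y₁−y₂|^p). -/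
open Set MeasureTheory

/-- concavity + `κ 0 = 0` gives the ratio bound `(v/a) * κ a ≤ κ v` for `0 ≤ v ≤ a`. -/
lemma aux18_ratio {κ : ℝ → ℝ} (hconc : ConcaveOn ℝ (Set.Ici 0) κ) (h0 : κ 0 = 0)
    {v a : ℝ} (hv : 0 ≤ v) (hva : v ≤ a) (ha : 0 < a) : (v / a) * κ a ≤ κ v := by
  have hva1 : v / a ≤ 1 := (div_le_one ha).2 hva
  have h1 := hconc.2 (Set.mem_Ici.2 ha.le) (Set.mem_Ici.2 (le_refl (0:ℝ)))
    (show (0:ℝ) ≤ v / a by positivity)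
    (show (0:ℝ) ≤ 1 - v / a by linarith) (by ring)
  have h2 : v / a * a = v := div_mul_cancel₀ v ha.ne'
  simp only [smul_eq_mul, mul_zero, add_zero, h0, h2] at h1
  linarith

/-- existence of a nonnegative supporting line at `w > 0`. -/
lemma aux18_support {κ : ℝ → ℝ} (hmono : MonotoneOn κ (Set.Ici 0))
    (hconc : ConcaveOn ℝ (Set.Ici 0) κ) (h0 : κ 0 = 0) {w : ℝ} (hw : 0 < w) :
    ∃ a b : ℝ, 0 ≤ a ∧ 0 ≤ b ∧ a * w + b = κ w ∧ ∀ x, 0 ≤ x → κ x ≤ a * x + b := by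
  set S : Set ℝ := (fun x => (κ x - κ w) / (x - w)) '' Set.Ioi w with hS
  have hne : S.Nonempty := ⟨_, ⟨w + 1, by simp, rfl⟩⟩
  have hub : ∀ z ∈ S, z ≤ κ w / w := by
    rintro z ⟨x, hx, rfl⟩
    have := hconc.slope_anti_adjacent (x := 0) (y := w) (z := x)
      (Set.mem_Ici.2 le_rfl) (Set.mem_Ici.2 (le_of_lt (hw.trans hx))) hw hx
    simpa [h0] using this
  have hbdd : BddAbove S := ⟨κ w / w, hub⟩
  set a : ℝ := sSup S with haS
  have haw : a ≤ κ w / w := csSup_le hne hub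
  have ha0 : 0 ≤ a := by
    have hmem : (κ (w + 1) - κ w) / (w + 1 - w) ∈ S := ⟨w + 1, by simp, rfl⟩
    have h1 : 0 ≤ (κ (w + 1) - κ w) / (w + 1 - w) := by
      have := hmono (Set.mem_Ici.2 hw.le) (Set.mem_Ici.2 (by linarith : (0:ℝ) ≤ w + 1))
        (by linarith : w ≤ w + 1)
      have h2 : w + 1 - w = 1 := by ring
      rw [h2]
      simpa using this
    exact h1.trans (le_csSup hbdd hmem)
  refine ⟨a, κ w - a * w, ha0, ?_, by ring, ?_⟩
  · have : a * w ≤ κ w := by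
      rw [← le_div_iff₀ hw]; exact haw
    linarith
  · intro x hx
    rcases lt_trichotomy x w with hlt | heq | hgt
    · -- a ≤ slope(x, w)
      have hle : a ≤ (κ w - κ x) / (w - x) := by
        apply csSup_le hne
        rintro z ⟨y, hy, rfl⟩
        have := hconc.slope_anti_adjacent (x := x) (y := w) (z := y)
          (Set.mem_Ici.2 hx) (Set.mem_Ici.2 (le_of_lt (hw.trans hy))) hlt hy
        exact this
      have hwx : 0 < w - x := by linarith
      rw [le_div_iff₀ hwx] at hle
      nlinarith
    · rw [heq]; ring_nf; linarith
    · have hmem : (κ x - κ w) / (x - w) ∈ S := ⟨x, hgt, rfl⟩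
      have hle : (κ x - κ w) / (x - w) ≤ a := le_csSup hbdd hmem
      have hxw : 0 < x - w := by linarith
      rw [div_le_iff₀ hxw] at hle
      nlinarith

/-- `(x ^ (1/p)) ^ p = x` -/
lemma aux18_rpow_cancel {p x : ℝ} (hx : 0 ≤ x) (hp : p ≠ 0) : (x ^ (1 / p)) ^ p = x := by
  rw [one_div, Real.rpow_inv_rpow hx hp]

/-- concavity of `u ↦ (a * u^(1/p) + b)^p` as a two-point inequality, via Minkowski. -/
lemma aux18_line_concave {p : ℝ} (hp : 1 < p) {a b : ℝ} (ha : 0 ≤ a) (hb : 0 ≤ b)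
    {u v l m : ℝ} (hu : 0 ≤ u) (hv : 0 ≤ v) (hl : 0 ≤ l) (hm : 0 ≤ m) (hlm : l + m = 1) :
    l * (a * u ^ (1 / p) + b) ^ p + m * (a * v ^ (1 / p) + b) ^ p ≤
      (a * (l * u + m * v) ^ (1 / p) + b) ^ p := by
  have hp0 : (0:ℝ) < p := lt_trans one_pos hp
  set F : Fin 2 → ℝ := ![a * (l * u) ^ (1 / p), a * (m * v) ^ (1 / p)] with hF
  set G : Fin 2 → ℝ := ![b * l ^ (1 / p), b * m ^ (1 / p)] with hG
  have hFnn : ∀ i ∈ Finset.univ, 0 ≤ F i := by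
    intro i _; fin_cases i <;> simp [hF] <;> positivity
  have hGnn : ∀ i ∈ Finset.univ, 0 ≤ G i := by
    intro i _; fin_cases i <;> simp [hG] <;> positivity
  have key := Real.Lp_add_le_of_nonneg (s := Finset.univ) (f := F) (g := G) hp.le hFnn hGnn
  -- compute the three sums
  have hFs : ∑ i, F i ^ p = a ^ p * (l * u + m * v) := by
    rw [Fin.sum_univ_two]
    simp only [hF, Matrix.cons_val_zero, Matrix.cons_val_one, Matrix.head_cons]
    rw [Real.mul_rpow ha (by positivity), Real.mul_rpow ha (by positivity),
      aux18_rpow_cancel (by positivity) hp0.ne', aux18_rpow_cancel (by positivity) hp0.ne']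
    ring
  have hGs : ∑ i, G i ^ p = b ^ p := by
    rw [Fin.sum_univ_two]
    simp only [hG, Matrix.cons_val_zero, Matrix.cons_val_one, Matrix.head_cons]
    rw [Real.mul_rpow hb (by positivity), Real.mul_rpow hb (by positivity),
      aux18_rpow_cancel hl hp0.ne', aux18_rpow_cancel hm hp0.ne']
    rw [← mul_add, hlm, mul_one]
  have hFGs : ∑ i, (F i + G i) ^ p =
      l * (a * u ^ (1 / p) + b) ^ p + m * (a * v ^ (1 / p) + b) ^ p := by
    rw [Fin.sum_univ_two]
    simp only [hF, hG, Matrix.cons_val_zero, Matrix.cons_val_one, Matrix.head_cons]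
    have h1 : a * (l * u) ^ (1 / p) + b * l ^ (1 / p)
        = l ^ (1 / p) * (a * u ^ (1 / p) + b) := by
      rw [Real.mul_rpow hl hu]; ring
    have h2 : a * (m * v) ^ (1 / p) + b * m ^ (1 / p)
        = m ^ (1 / p) * (a * v ^ (1 / p) + b) := by
      rw [Real.mul_rpow hm hv]; ring
    rw [h1, h2, Real.mul_rpow (by positivity) (by positivity),
      Real.mul_rpow (by positivity) (by positivity),
      aux18_rpow_cancel hl hp0.ne', aux18_rpow_cancel hm hp0.ne']
  rw [hFs, hGs, hFGs] at key
  have hrw : (a ^ p * (l * u + m * v)) ^ (1 / p) = a * (l * u + m * v) ^ (1 / p) := by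
    rw [Real.mul_rpow (by positivity) (by positivity), one_div,
      Real.rpow_rpow_inv ha hp0.ne']
  have hrw2 : (b ^ p) ^ (1 / p) = b := by
    rw [one_div, Real.rpow_rpow_inv hb hp0.ne']
  rw [hrw, hrw2] at key
  -- raise both sides to the power p
  have hX : 0 ≤ l * (a * u ^ (1 / p) + b) ^ p + m * (a * v ^ (1 / p) + b) ^ p := by positivity
  calc l * (a * u ^ (1 / p) + b) ^ p + m * (a * v ^ (1 / p) + b) ^ p
      = ((l * (a * u ^ (1 / p) + b) ^ p + m * (a * v ^ (1 / p) + b) ^ p) ^ (1 / p)) ^ p :=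
        (aux18_rpow_cancel hX hp0.ne').symm
    _ ≤ (a * (l * u + m * v) ^ (1 / p) + b) ^ p :=
        Real.rpow_le_rpow (by positivity) key hp0.le
/-- Concavity of `u ↦ κ(u^(1/p))^p` on `[0, ∞)`. -/
lemma aux18_concave {p : ℝ} (hp : 1 < p) {κ : ℝ → ℝ} (hnn : ∀ u ≥ 0, 0 ≤ κ u)
    (hmono : MonotoneOn κ (Set.Ici 0)) (hconc : ConcaveOn ℝ (Set.Ici 0) κ)
    (h0 : κ 0 = 0) :
    ConcaveOn ℝ (Set.Ici 0) (fun u : ℝ => (κ (u ^ (1 / p))) ^ p) := by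
  have hp0 : (0:ℝ) < p := lt_trans one_pos hp
  have hz2 : κ ((0:ℝ) ^ (1 / p)) ^ p = 0 := by
    rw [Real.zero_rpow (one_div_ne_zero hp0.ne'), h0, Real.zero_rpow hp0.ne']
  refine ⟨convex_Ici 0, ?_⟩
  intro u hu v hv l m hl hm hlm
  simp only [smul_eq_mul]
  rw [Set.mem_Ici] at hu hv
  rcases eq_or_lt_of_le (show (0:ℝ) ≤ l * u + m * v by positivity) with hM | hM
  · -- the combination is 0 : both weighted terms vanish
    have hlu : l * u = 0 := by nlinarith [mul_nonneg hl hu, mul_nonneg hm hv]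
    have hmv : m * v = 0 := by nlinarith [mul_nonneg hl hu, mul_nonneg hm hv]
    have ht1 : l * κ (u ^ (1 / p)) ^ p = 0 := by
      rcases mul_eq_zero.1 hlu with h | h
      · rw [h, zero_mul]
      · rw [h, hz2, mul_zero]
    have ht2 : m * κ (v ^ (1 / p)) ^ p = 0 := by
      rcases mul_eq_zero.1 hmv with h | h
      · rw [h, zero_mul]
      · rw [h, hz2, mul_zero]
    rw [ht1, ht2, ← hM, hz2, add_zero]
  · have hw : 0 < (l * u + m * v) ^ (1 / p) := Real.rpow_pos_of_pos hM _
    obtain ⟨a, b, ha, hb, heq, hle⟩ := aux18_support hmono hconc h0 hw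
    have h1 : κ (u ^ (1 / p)) ^ p ≤ (a * u ^ (1 / p) + b) ^ p :=
      Real.rpow_le_rpow (hnn _ (Real.rpow_nonneg hu _))
        (hle _ (Real.rpow_nonneg hu _)) hp0.le
    have h2 : κ (v ^ (1 / p)) ^ p ≤ (a * v ^ (1 / p) + b) ^ p :=
      Real.rpow_le_rpow (hnn _ (Real.rpow_nonneg hv _))
        (hle _ (Real.rpow_nonneg hv _)) hp0.le
    calc l * κ (u ^ (1 / p)) ^ p + m * κ (v ^ (1 / p)) ^ p
        ≤ l * (a * u ^ (1 / p) + b) ^ p + m * (a * v ^ (1 / p) + b) ^ p :=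
          add_le_add (mul_le_mul_of_nonneg_left h1 hl) (mul_le_mul_of_nonneg_left h2 hm)
      _ ≤ (a * (l * u + m * v) ^ (1 / p) + b) ^ p :=
          aux18_line_concave hp ha hb hu hv hl hm hlm
      _ = κ ((l * u + m * v) ^ (1 / p)) ^ p := by rw [heq]
/-- non-integrability transfers via the change of variables `u = v^p`. -/
lemma aux18_div {p : ℝ} (hp : 1 < p) {κ : ℝ → ℝ}
    (hcont : ContinuousOn κ (Set.Ici 0)) (hconc : ConcaveOn ℝ (Set.Ici 0) κ)
    (h0 : κ 0 = 0) (hpos : ∀ u > (0 : ℝ), 0 < κ u) {a : ℝ} (ha : 0 < a)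
    (hni : ¬ MeasureTheory.IntegrableOn (fun u => u ^ (p - 1) / (κ u) ^ p) (Set.Ioc 0 a)) :
    ¬ MeasureTheory.IntegrableOn
      (fun u => 1 / ((κ (u ^ (1 / p))) ^ p + u)) (Set.Ioc 0 (a ^ p)) := by
  have hp0 : (0:ℝ) < p := lt_trans one_pos hp
  intro hint
  apply hni
  -- image of `Ioc 0 a` under `v ↦ v ^ p`
  have himg : (fun v : ℝ => v ^ p) '' Set.Ioc 0 a = Set.Ioc 0 (a ^ p) := by
    ext x
    constructor
    · rintro ⟨v, ⟨hv0, hva⟩, rfl⟩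
      exact ⟨Real.rpow_pos_of_pos hv0 p, Real.rpow_le_rpow hv0.le hva hp0.le⟩
    · rintro ⟨hx0, hxa⟩
      refine ⟨x ^ (1 / p), ⟨Real.rpow_pos_of_pos hx0 _, ?_⟩,
        aux18_rpow_cancel hx0.le hp0.ne'⟩
      calc x ^ (1 / p) ≤ (a ^ p) ^ (1 / p) :=
            Real.rpow_le_rpow hx0.le hxa (by positivity)
        _ = a := by rw [one_div, Real.rpow_rpow_inv ha.le hp0.ne']
  rw [← himg] at hint
  have hderiv : ∀ v ∈ Set.Ioc 0 a,
      HasDerivWithinAt (fun x : ℝ => x ^ p) (p * v ^ (p - 1)) (Set.Ioc 0 a) v :=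
    fun v hv => (Real.hasDerivAt_rpow_const (Or.inl hv.1.ne')).hasDerivWithinAt
  have hinj : Set.InjOn (fun v : ℝ => v ^ p) (Set.Ioc 0 a) := by
    intro x hx y hy hxy
    have h1 := congrArg (fun t : ℝ => t ^ (1 / p)) hxy
    simpa [one_div, Real.rpow_rpow_inv hx.1.le hp0.ne',
      Real.rpow_rpow_inv hy.1.le hp0.ne'] using h1
  have hsub := (MeasureTheory.integrableOn_image_iff_integrableOn_abs_deriv_smul
    measurableSet_Ioc hderiv hinj
    (fun u => 1 / ((κ (u ^ (1 / p))) ^ p + u))).mp hint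
  -- `hsub : IntegrableOn (fun v => |p * v^(p-1)| • (1 / (κ((v^p)^(1/p))^p + v^p))) (Ioc 0 a)`
  set c : ℝ := κ a / a with hc
  have hc0 : 0 < c := div_pos (hpos a ha) ha
  set C : ℝ := (1 + 1 / c ^ p) / p with hC
  have hC0 : 0 < C := by positivity
  apply MeasureTheory.Integrable.mono (hsub.const_mul C)
  · -- measurability of the original integrand
    apply ContinuousOn.aestronglyMeasurable _ measurableSet_Ioc
    apply ContinuousOn.div
    · exact continuousOn_id.rpow_const (fun x hx => Or.inl hx.1.ne')
    · exact (hcont.mono (fun x hx => hx.1.le)).rpow_const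
        (fun x hx => Or.inl (hpos x hx.1).ne')
    · exact fun x hx => (Real.rpow_pos_of_pos (hpos x hx.1) p).ne'
  · rw [MeasureTheory.ae_restrict_iff' measurableSet_Ioc]
    filter_upwards with v hv
    have hv0 : 0 < v := hv.1
    have hκv : 0 < κ v := hpos v hv0
    have hvp : (v ^ p) ^ (1 / p) = v := by
      rw [one_div, Real.rpow_rpow_inv hv0.le hp0.ne']
    have hcv : c * v ≤ κ v := by
      have := aux18_ratio hconc h0 hv0.le hv.2 ha
      calc c * v = (v / a) * κ a := by rw [hc]; ring
        _ ≤ κ v := this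
    have hvple : v ^ p ≤ κ v ^ p / c ^ p := by
      have h1 : v ≤ κ v / c := (le_div_iff₀ hc0).2 (by linarith)
      calc v ^ p ≤ (κ v / c) ^ p := Real.rpow_le_rpow hv0.le h1 hp0.le
        _ = κ v ^ p / c ^ p := Real.div_rpow hκv.le hc0.le p
    have hκp : 0 < κ v ^ p := Real.rpow_pos_of_pos hκv p
    have hD : 0 < κ v ^ p + v ^ p := by positivity
    have hvq : 0 ≤ v ^ (p - 1) := Real.rpow_nonneg hv0.le _
    have hbound : v ^ (p - 1) / κ v ^ p
        ≤ C * (|p * v ^ (p - 1)| * (1 / (κ v ^ p + v ^ p))) := by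
      have habs : |p * v ^ (p - 1)| = p * v ^ (p - 1) := abs_of_nonneg (by positivity)
      rw [habs]
      have hrhs : C * (p * v ^ (p - 1) * (1 / (κ v ^ p + v ^ p)))
          = (1 + 1 / c ^ p) * v ^ (p - 1) / (κ v ^ p + v ^ p) := by
        field_simp [hC]
        rw [hC, div_mul_cancel₀ _ hp0.ne', add_mul, one_div,
          inv_mul_cancel₀ (Real.rpow_pos_of_pos hc0 p).ne', one_mul, add_comm]
      rw [hrhs, div_le_div_iff₀ hκp hD]
      have hcp : 0 < c ^ p := Real.rpow_pos_of_pos hc0 p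
      have hD2 : κ v ^ p + v ^ p ≤ (1 + 1 / c ^ p) * κ v ^ p := by
        have : κ v ^ p / c ^ p = (1 / c ^ p) * κ v ^ p := by ring
        nlinarith
      nlinarith
    have hnn1 : 0 ≤ v ^ (p - 1) / κ v ^ p := by positivity
    have hnn2 : 0 ≤ C * (|p * v ^ (p - 1)| * (1 / (κ v ^ p + v ^ p))) := by positivity
    rw [Real.norm_eq_abs, Real.norm_eq_abs]
    rw [abs_of_nonneg hnn1]
    calc v ^ (p - 1) / κ v ^ p
        ≤ C * (|p * v ^ (p - 1)| * (1 / (κ v ^ p + v ^ p))) := hbound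
      _ ≤ |C * (|p * v ^ (p - 1)| • (1 / (κ (( v ^ p) ^ (1 / p)) ^ p + v ^ p)))| := by
          rw [smul_eq_mul, hvp]
          exact le_abs_self _
theorem stmt18 {Ω : Type*} (k d : ℕ) (p : ℝ) (hp : 1 < p) (T : ℝ)
    (g : Ω → ℝ → EuclideanSpace ℝ (Fin k) → Matrix (Fin k) (Fin d) ℝ →
      EuclideanSpace ℝ (Fin k))
    (κ : ℝ → ℝ) (hnn : ∀ u ≥ 0, 0 ≤ κ u)
    (hmono : MonotoneOn κ (Set.Ici 0)) (hcont : ContinuousOn κ (Set.Ici 0))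
    (hconc : ConcaveOn ℝ (Set.Ici 0) κ)
    (h0 : κ 0 = 0) (hpos : ∀ u > (0 : ℝ), 0 < κ u)
    (hdiv : ∃ a > (0 : ℝ),
      ¬ MeasureTheory.IntegrableOn (fun u => u ^ (p - 1) / (κ u) ^ p) (Set.Ioc 0 a))
    (hg : ∀ (ω : Ω) (t : ℝ), t ∈ Set.Icc 0 T →
      ∀ (y₁ y₂ : EuclideanSpace ℝ (Fin k)) (z : Matrix (Fin k) (Fin d) ℝ),
        ‖g ω t y₁ z - g ω t y₂ z‖ ≤ κ ‖y₁ - y₂‖) :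
    MonotoneOn (fun u : ℝ => (κ (u ^ (1 / p))) ^ p + u) (Set.Ici 0) ∧
    ConcaveOn ℝ (Set.Ici 0) (fun u : ℝ => (κ (u ^ (1 / p))) ^ p + u) ∧
    (κ ((0 : ℝ) ^ (1 / p))) ^ p + (0 : ℝ) = 0 ∧
    (∀ u > (0 : ℝ), 0 < (κ (u ^ (1 / p))) ^ p + u) ∧
    (∃ b > (0 : ℝ),
      ¬ MeasureTheory.IntegrableOn
        (fun u => 1 / ((κ (u ^ (1 / p))) ^ p + u)) (Set.Ioc 0 b)) ∧
    (∀ (ω : Ω) (t : ℝ), t ∈ Set.Icc 0 T →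
      ∀ (y₁ y₂ : EuclideanSpace ℝ (Fin k)) (z : Matrix (Fin k) (Fin d) ℝ),
        ‖g ω t y₁ z - g ω t y₂ z‖ ^ p ≤
          (κ ((‖y₁ - y₂‖ ^ p) ^ (1 / p))) ^ p + ‖y₁ - y₂‖ ^ p) := by
  have hp0 : (0:ℝ) < p := lt_trans one_pos hp
  refine ⟨?_, ?_, ?_, ?_, ?_, ?_⟩
  · -- monotone
    intro u hu v hv huv
    rw [Set.mem_Ici] at hu hv
    have h1 : u ^ (1 / p) ≤ v ^ (1 / p) := Real.rpow_le_rpow hu huv (by positivity)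
    have h2 : κ (u ^ (1 / p)) ≤ κ (v ^ (1 / p)) :=
      hmono (Set.mem_Ici.2 (Real.rpow_nonneg hu _)) (Set.mem_Ici.2 (Real.rpow_nonneg hv _)) h1
    exact add_le_add
      (Real.rpow_le_rpow (hnn _ (Real.rpow_nonneg hu _)) h2 hp0.le) huv
  · -- concave
    exact (aux18_concave hp hnn hmono hconc h0).add (concaveOn_id (convex_Ici 0))
  · -- value at 0
    rw [Real.zero_rpow (one_div_ne_zero hp0.ne'), h0, Real.zero_rpow hp0.ne', add_zero]
  · -- positive
    intro u hu
    have : 0 ≤ κ (u ^ (1 / p)) ^ p :=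
      Real.rpow_nonneg (hnn _ (Real.rpow_nonneg hu.le _)) p
    linarith
  · -- divergence of the integral
    obtain ⟨a, ha, hni⟩ := hdiv
    exact ⟨a ^ p, Real.rpow_pos_of_pos ha p,
      aux18_div hp hcont hconc h0 hpos ha hni⟩
  · -- the Lipschitz-type bound
    intro ω t ht y₁ y₂ z
    have h1 : (‖y₁ - y₂‖ ^ p) ^ (1 / p) = ‖y₁ - y₂‖ := by
      rw [one_div, Real.rpow_rpow_inv (norm_nonneg _) hp0.ne']
    rw [h1]
    have h2 : ‖g ω t y₁ z - g ω t y₂ z‖ ^ p ≤ κ ‖y₁ - y₂‖ ^ p :=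
      Real.rpow_le_rpow (norm_nonneg _) (hg ω t ht y₁ y₂ z) hp0.le
    have h3 : 0 ≤ ‖y₁ - y₂‖ ^ p := Real.rpow_nonneg (norm_nonneg _) p
    linarith
end

section
/- Monotonicity in p of the divergence condition: let κ: ℝ≥0 → ℝ≥0 be nondecreasing concave with κ(0)=0 and κ(u)>0 for u>0, and let 1 < p < q. If ∫_{0^+} du/κ(u^{1/q})^q = +∞, then ∫_{0^+} du/κ(u^{1/p})^p = +∞. Equivalently, if ∫_{0^+} u^{q-1}/κ(u)^q du = +∞ then ∫_{0^+} u^{p-1}/κ(u)^p du = +∞. -/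
open MeasureTheory Set Real

lemma image_rpow_Ioc' {A r : ℝ} (hA : 0 < A) (hr : 0 < r) :
    (fun v : ℝ => v ^ r) '' Set.Ioc 0 A = Set.Ioc 0 (A ^ r) := by
  ext u
  constructor
  · rintro ⟨v, ⟨hv0, hvA⟩, rfl⟩
    exact ⟨Real.rpow_pos_of_pos hv0 r, Real.rpow_le_rpow hv0.le hvA hr.le⟩
  · rintro ⟨hu0, huA⟩
    refine ⟨u ^ r⁻¹, ⟨Real.rpow_pos_of_pos hu0 _, ?_⟩, Real.rpow_inv_rpow hu0.le hr.ne'⟩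
    calc u ^ r⁻¹ ≤ (A ^ r) ^ r⁻¹ := Real.rpow_le_rpow hu0.le huA (by positivity)
    _ = A := Real.rpow_rpow_inv hA.le hr.ne'

lemma cov_rpow' {A r : ℝ} (hr : 0 < r) (hA : 0 < A) (g : ℝ → ℝ) :
    MeasureTheory.IntegrableOn g (Set.Ioc 0 (A ^ r)) ↔
      MeasureTheory.IntegrableOn (fun v => |r * v ^ (r - 1)| • g (v ^ r)) (Set.Ioc 0 A) := by
  rw [← image_rpow_Ioc' hA hr]
  have hsm : StrictMonoOn (fun v : ℝ => v ^ r) (Set.Ioc 0 A) :=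
    fun x hx y _ hxy => Real.rpow_lt_rpow hx.1.le hxy hr
  exact MeasureTheory.integrableOn_image_iff_integrableOn_abs_deriv_smul measurableSet_Ioc
    (fun x hx => (Real.hasDerivAt_rpow_const (Or.inl hx.1.ne')).hasDerivWithinAt)
    hsm.injOn g

theorem stmt19 (κ : ℝ → ℝ) (hnn : ∀ u ≥ 0, 0 ≤ κ u)
    (hmono : MonotoneOn κ (Set.Ici 0)) (hconc : ConcaveOn ℝ (Set.Ici 0) κ)
    (h0 : κ 0 = 0) (hpos : ∀ u > (0 : ℝ), 0 < κ u)
    (p q : ℝ) (hp : 1 < p) (hpq : p < q)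
    (hdiv : ∃ a > (0 : ℝ),
      ¬ MeasureTheory.IntegrableOn
        (fun u => 1 / (κ (u ^ (1 / q))) ^ q) (Set.Ioc 0 a)) :
    ∃ b > (0 : ℝ),
      ¬ MeasureTheory.IntegrableOn
        (fun u => 1 / (κ (u ^ (1 / p))) ^ p) (Set.Ioc 0 b) := by
  obtain ⟨a, ha, hna⟩ := hdiv
  have hq : 1 < q := hp.trans hpq
  have hq0 : 0 < q := lt_trans one_pos hq
  have hp0 : 0 < p := lt_trans one_pos hp
  set A : ℝ := a ^ q⁻¹ with hAdef
  have hA : 0 < A := Real.rpow_pos_of_pos ha _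
  have hAq : A ^ q = a := Real.rpow_inv_rpow ha.le hq0.ne'
  have hκA : 0 < κ A := hpos A hA
  -- extended monotone version of κ for measurability
  set κ' : ℝ → ℝ := fun x => κ (max 0 x) with hκ'def
  have hκ'mono : Monotone κ' := fun x y hxy =>
    hmono (Set.mem_Ici.2 (le_max_left _ _)) (Set.mem_Ici.2 (le_max_left _ _))
      (max_le_max le_rfl hxy)
  have hκ'meas : Measurable κ' := hκ'mono.measurable
  refine ⟨A ^ p, Real.rpow_pos_of_pos hA _, fun hint => hna ?_⟩
  -- change of variables for the p-integral
  have h1 : MeasureTheory.IntegrableOn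
      (fun v => |p * v ^ (p - 1)| • (1 / (κ ((v ^ p) ^ (1 / p))) ^ p)) (Set.Ioc 0 A) :=
    (cov_rpow' hp0 hA (fun u => 1 / (κ (u ^ (1 / p))) ^ p)).mp hint
  set C : ℝ := (q / p) * (A / κ A) ^ (q - p) with hCdef
  have hC : 0 ≤ C := mul_nonneg (by positivity)
    (Real.rpow_nonneg (div_nonneg hA.le hκA.le) _)
  -- the q-side transformed integrand
  set G : ℝ → ℝ := fun v => |q * v ^ (q - 1)| • (1 / (κ ((v ^ q) ^ (1 / q))) ^ q) with hGdef
  -- simplification on Ioc 0 A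
  have hsimp : ∀ v ∈ Set.Ioc 0 A, ((v ^ q) ^ (1 / q)) = v := fun v hv => by
    rw [one_div, Real.rpow_rpow_inv hv.1.le hq0.ne']
  have hsimp' : ∀ v ∈ Set.Ioc 0 A, ((v ^ p) ^ (1 / p)) = v := fun v hv => by
    rw [one_div, Real.rpow_rpow_inv hv.1.le hp0.ne']
  -- concavity bound : κ v ≥ (v/A) * κ A for v ∈ Ioc 0 A
  have hconcav : ∀ v ∈ Set.Ioc 0 A, (v / A) * κ A ≤ κ v := by
    intro v hv
    have h1' : (0:ℝ) ≤ v / A := div_nonneg hv.1.le hA.le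
    have h2' : (0:ℝ) ≤ 1 - v / A := by
      have : v / A ≤ 1 := (div_le_one hA).2 hv.2
      linarith
    have := hconc.2 (Set.mem_Ici.2 hA.le) (Set.mem_Ici.2 le_rfl) h1' h2' (by ring)
    simpa [h0, smul_eq_mul, mul_div_assoc, div_mul_eq_mul_div, mul_comm,
      mul_div_cancel₀ _ hA.ne'] using this
  -- pointwise comparison
  have hbound : ∀ v ∈ Set.Ioc 0 A,
      G v ≤ C * (|p * v ^ (p - 1)| • (1 / (κ ((v ^ p) ^ (1 / p))) ^ p)) := by
    intro v hv
    have hv0 : 0 < v := hv.1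
    have hκv : 0 < κ v := hpos v hv0
    have habs1 : |q * v ^ (q - 1)| = q * v ^ (q - 1) :=
      abs_of_nonneg (mul_nonneg hq0.le (Real.rpow_nonneg hv0.le _))
    have habs2 : |p * v ^ (p - 1)| = p * v ^ (p - 1) :=
      abs_of_nonneg (mul_nonneg hp0.le (Real.rpow_nonneg hv0.le _))
    simp only [hGdef, smul_eq_mul]
    rw [hsimp v hv, hsimp' v hv, habs1, habs2]
    have hratio : (v / κ v) ^ (q - p) ≤ (A / κ A) ^ (q - p) := by
      apply Real.rpow_le_rpow (div_nonneg hv0.le hκv.le) _ (by linarith)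
      rw [div_le_div_iff₀ hκv hκA]
      have := hconcav v hv
      calc v * κ A = (v / A) * κ A * A := by field_simp
      _ ≤ κ v * A := mul_le_mul_of_nonneg_right this hA.le
      _ = A * κ v := mul_comm _ _
    -- rewrite LHS
    have hvsplit : v ^ (q - 1) = v ^ (p - 1) * v ^ (q - p) := by
      rw [← Real.rpow_add hv0]; ring_nf
    have hκsplit : κ v ^ q = κ v ^ p * κ v ^ (q - p) := by
      rw [← Real.rpow_add hκv]; ring_nf
    have hdiv_rpow : v ^ (q - p) / κ v ^ (q - p) = (v / κ v) ^ (q - p) :=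
      (Real.div_rpow hv0.le hκv.le _).symm
    have hκvp : (0:ℝ) < κ v ^ p := Real.rpow_pos_of_pos hκv _
    have hκvqp : (0:ℝ) < κ v ^ (q - p) := Real.rpow_pos_of_pos hκv _
    rw [hvsplit, hκsplit]
    have key : q * (v ^ (p - 1) * v ^ (q - p)) * (1 / (κ v ^ p * κ v ^ (q - p)))
        = (q * v ^ (p - 1) / κ v ^ p) * ((v / κ v) ^ (q - p)) := by
      rw [← hdiv_rpow]; field_simp
    rw [key, hCdef]
    have hRHS : (q / p) * (A / κ A) ^ (q - p) * (p * v ^ (p - 1) * (1 / κ v ^ p))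
        = (q * v ^ (p - 1) / κ v ^ p) * ((A / κ A) ^ (q - p)) := by
      field_simp
    rw [hRHS]
    exact mul_le_mul_of_nonneg_left hratio
      (div_nonneg (by positivity) (Real.rpow_pos_of_pos hκv p).le)
  -- measurability of G on Ioc 0 A
  have hGmeas : MeasureTheory.AEStronglyMeasurable G
      (MeasureTheory.volume.restrict (Set.Ioc 0 A)) := by
    have hmeas' : Measurable (fun v : ℝ => |q * v ^ (q - 1)| * (1 / (κ' v) ^ q)) := by
      have m1 : Measurable (fun v : ℝ => v ^ (q - 1)) :=
        (Real.continuous_rpow_const (by linarith)).measurable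
      have m2 : Measurable (fun y : ℝ => y ^ q) :=
        (Real.continuous_rpow_const hq0.le).measurable
      exact ((m1.const_mul q).abs).mul ((m2.comp hκ'meas).const_div 1)
    refine hmeas'.aestronglyMeasurable.congr ?_
    filter_upwards [MeasureTheory.ae_restrict_mem measurableSet_Ioc] with v hv
    have : κ' v = κ ((v ^ q) ^ (1 / q)) := by
      rw [hsimp v hv, hκ'def]; simp [max_eq_right hv.1.le]
    simp [hGdef, this, smul_eq_mul]
  -- conclude integrability of G by domination
  have hGint : MeasureTheory.IntegrableOn G (Set.Ioc 0 A) := by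
    refine ((h1.const_mul C).mono' hGmeas ?_)
    filter_upwards [MeasureTheory.ae_restrict_mem measurableSet_Ioc] with v hv
    have hGnn : 0 ≤ G v := by
      simp only [hGdef, smul_eq_mul]
      have h2 : (0:ℝ) ≤ 1 / (κ ((v ^ q) ^ (1 / q))) ^ q := by
        rw [hsimp v hv]
        exact one_div_nonneg.mpr (Real.rpow_nonneg (hpos v hv.1).le q)
      exact mul_nonneg (abs_nonneg _) h2
    rw [Real.norm_eq_abs, abs_of_nonneg hGnn]
    exact hbound v hv
  have := (cov_rpow' hq0 hA (fun u => 1 / (κ (u ^ (1 / q))) ^ q)).mpr hGint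
  rwa [hAq] at this
end
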